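/- Let X be a proper geodesic metric space and f : X → ℝ a continuous proper positive function such that for every geodesic segment γ : [-d,d] → X and every solution g of g'' - g = 0 on [-d,d] with g(±d) = f(γ(±d)), one has f(γ(t)) ≤ g(t) for all t ∈ [-d,d] (i.e. f is F(-1)-convex in the barrier sense). Then f attains its minimum at a unique point of X. -/
import Mathlib


open Set Filter Topology

/-- A unit-speed geodesic segment parametrized on `[-d, d]`. -/
def IsGeodesicOn {X : Type*} [MetricSpace X] (γ : ℝ → X) (d : ℝ) : Prop :=
  ∀ s t : ℝ, s ∈ Set.Icc (-d) d → t ∈ Set.Icc (-d) d → dist (γ s) (γ t) = |s - t|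

/-- `f` is F(-1)-convex in the barrier sense: along every geodesic it is dominated by
every solution `g` of `g'' - g = 0` (i.e. `g t = A cosh t + B sinh t`) agreeing with
`f ∘ γ` at the endpoints. -/
def FMinusOneConvex {X : Type*} [MetricSpace X] (f : X → ℝ) : Prop :=
  ∀ d : ℝ, 0 ≤ d → ∀ γ : ℝ → X, IsGeodesicOn γ d →
    ∀ A B : ℝ,
      A * Real.cosh (-d) + B * Real.sinh (-d) = f (γ (-d)) →
      A * Real.cosh d + B * Real.sinh d = f (γ d) →
      ∀ t ∈ Set.Icc (-d) d, f (γ t) ≤ A * Real.cosh t + B * Real.sinh t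

/-- a continuous, positive, proper, F(-1)-convex function on a proper
geodesic metric space attains its minimum at a unique point. -/
theorem fminusone_convex_unique_min {X : Type*} [MetricSpace X] [ProperSpace X] [Nonempty X]
    (hgeo : ∀ x y : X, ∃ γ : ℝ → X, IsGeodesicOn γ (dist x y / 2) ∧
      γ (-(dist x y / 2)) = x ∧ γ (dist x y / 2) = y)
    (f : X → ℝ)
    (hcont : Continuous f)
    (hpos : ∀ x, 0 < f x)
    (hproper : ∀ K : Set ℝ, IsCompact K → IsCompact (f ⁻¹' K))
    (hconv : FMinusOneConvex f) :
    ∃! x : X, IsMinOn f Set.univ x := by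
  obtain ⟨x0⟩ := ‹Nonempty X›
  -- existence
  have hK : IsCompact (f ⁻¹' Set.Icc 0 (f x0)) := hproper _ isCompact_Icc
  have hx0K : x0 ∈ f ⁻¹' Set.Icc 0 (f x0) := ⟨(hpos x0).le, le_rfl⟩
  obtain ⟨x, hxK, hxmin⟩ := hK.exists_isMinOn ⟨x0, hx0K⟩ (hcont.continuousOn)
  have hmin : IsMinOn f Set.univ x := by
    intro y _
    by_cases hy : y ∈ f ⁻¹' Set.Icc 0 (f x0)
    · exact hxmin hy
    · have h1 : f x ≤ f x0 := hxmin hx0K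
      have h2 : ¬ (0 ≤ f y ∧ f y ≤ f x0) := hy
      push_neg at h2
      exact le_of_lt (lt_of_le_of_lt h1 (h2 (hpos y).le))
  refine ⟨x, hmin, fun y hy => ?_⟩
  -- uniqueness
  by_contra hne
  have hfeq : f x = f y := le_antisymm (hmin (mem_univ y)) (hy (mem_univ x))
  set d := dist y x / 2 with hd
  have hdpos : 0 < d := by
    have : 0 < dist y x := dist_pos.2 hne
    positivity
  obtain ⟨γ, hγ, hγa, hγb⟩ := hgeo y x
  rw [← hd] at hγ hγa hγb
  have hcosh : (1:ℝ) < Real.cosh d := Real.one_lt_cosh.2 hdpos.ne'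
  have hc0 : Real.cosh d ≠ 0 := by positivity
  have key := hconv d hdpos.le γ hγ (f y / Real.cosh d) 0 ?_ ?_ 0
    ⟨neg_nonpos.2 hdpos.le, hdpos.le⟩
  · rw [Real.cosh_zero, Real.sinh_zero, mul_one, mul_zero, add_zero] at key
    have hle : f y ≤ f (γ 0) := hfeq ▸ hmin (mem_univ (γ 0))
    have : f y / Real.cosh d < f y := by
      have := hpos y
      rw [div_lt_iff₀ (by positivity)]
      nlinarith
    linarith
  · rw [Real.cosh_neg, Real.sinh_neg, zero_mul, add_zero, div_mul_cancel₀ _ hc0, hγa]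
  · rw [zero_mul, add_zero, div_mul_cancel₀ _ hc0, hγb, hfeq]
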